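/- Let G¹,…,Gⁿ : ℝ² → ℝ be Lebesgue integrable radial kernels with ‖Gⁱ‖_{L¹} ≠ 0 for each i, and let F_{Gⁱ} denote the associated normalized convolution operators. Let φ₁, φ₂ : ℝ² → ℝ be bounded measurable functions, let g : ℝ² → ℝ² be a surjective isometry, and set ε = sup_{x∈ℝ²} |φ₁(x) − φ₂(g(x))|. Then for every a ∈ ℝⁿ and every x ∈ ℝ²: if F_{Gⁱ}(φ₁)(x) ≤ a_i for all i, then F_{Gⁱ}(φ₂)(g(x)) ≤ a_i + ε for all i; and if F_{Gⁱ}(φ₂)(g(x)) ≤ a_i for all i, then F_{Gⁱ}(φ₁)(x) ≤ a_i + ε for all i. That is, the multi-GENEO sublevel set filtrations of (F_{G¹}(φ₁),…,F_{Gⁿ}(φ₁)) and (F_{G¹}(φ₂),…,F_{Gⁿ}(φ₂)) are ε-interleaved via g, with ε = sup_x |φ₁(x) − (φ₂∘g)(x)|; in particular, taking g to be the identity, they are D(φ₁,φ₂)-interleaved where D is the sup pseudometric. -/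

import Mathlib

open MeasureTheory Function

/-- The Euclidean plane `ℝ²` with Lebesgue measure. -/
noncomputable abbrev Plane : Type := EuclideanSpace ℝ (Fin 2)

/-- The normalized convolution operator associated with an integrable kernel `G`:
`F_G(φ)(x) = (1/‖G‖_{L¹}) ∫ φ(y) G(x − y) dy`. -/
noncomputable def normConv (G : Plane → ℝ) (φ : Plane → ℝ) (x : Plane) : ℝ :=
  (1 / ∫ y, |G y|) * ∫ y, φ y * G (x - y)

/-- A real-valued function is bounded. -/
def IsBoundedFun {X : Type*} (φ : X → ℝ) : Prop := ∃ C : ℝ, ∀ x, |φ x| ≤ C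

lemma normConv_le_of_dist_le (G : Plane → ℝ) (hG : Integrable G) (hG0 : (∫ y, |G y|) ≠ 0)
    (φ ψ : Plane → ℝ) (hφm : AEStronglyMeasurable φ volume) (hψm : AEStronglyMeasurable ψ volume)
    (hφb : IsBoundedFun φ) (hψb : IsBoundedFun ψ) (ε : ℝ)
    (hd : ∀ y, |φ y - ψ y| ≤ ε) (x : Plane) :
    normConv G φ x ≤ normConv G ψ x + ε := by
  set I := ∫ y, |G y| with hI
  have Ipos : 0 < I := lt_of_le_of_ne (integral_nonneg fun y => abs_nonneg _) (Ne.symm hG0)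
  have hGx : Integrable (fun y => G (x - y)) := hG.comp_sub_left x
  obtain ⟨C₁, hC₁⟩ := hφb
  obtain ⟨C₂, hC₂⟩ := hψb
  have intφ : Integrable (fun y => φ y * G (x - y)) :=
    hGx.bdd_mul hφm (c := C₁) (Filter.Eventually.of_forall fun y => by rw [Real.norm_eq_abs]; exact hC₁ y)
  have intψ : Integrable (fun y => ψ y * G (x - y)) :=
    hGx.bdd_mul hψm (c := C₂) (Filter.Eventually.of_forall fun y => by rw [Real.norm_eq_abs]; exact hC₂ y)
  have hdiff : normConv G φ x - normConv G ψ x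
      = (1 / I) * ∫ y, (φ y - ψ y) * G (x - y) := by
    rw [normConv, normConv, ← mul_sub, ← integral_sub intφ intψ]
    simp_rw [sub_mul]
    rfl
  have habs : |∫ y, (φ y - ψ y) * G (x - y)| ≤ ε * I := by
    calc |∫ y, (φ y - ψ y) * G (x - y)| ≤ ∫ y, |φ y - ψ y| * |G (x - y)| := by
          simpa [Real.norm_eq_abs, abs_mul] using
            norm_integral_le_integral_norm (fun y => (φ y - ψ y) * G (x - y))
      _ ≤ ∫ y, ε * |G (x - y)| := by
          have hint : Integrable (fun y => |φ y - ψ y| * |G (x - y)|) := by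
            have h := (intφ.sub intψ).abs
            simp only [Pi.sub_apply, ← sub_mul, abs_mul] at h
            exact h
          refine integral_mono hint (hGx.abs.const_mul ε) fun y => ?_
          exact mul_le_mul_of_nonneg_right (hd y) (abs_nonneg _)
      _ = ε * ∫ y, |G (x - y)| := integral_const_mul ε _
      _ = ε * I := by rw [integral_sub_left_eq_self (fun y => |G y|) volume x]
  have h1 : normConv G φ x - normConv G ψ x ≤ (1 / I) * (ε * I) := by
    rw [hdiff]
    refine mul_le_mul_of_nonneg_left ((le_abs_self _).trans habs) (by positivity)
  have h2 : (1 / I) * (ε * I) = ε := by field_simp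
  linarith [h1, h2 ▸ h1]

lemma measurePreserving_of_isometry {g : Plane → Plane} (hg : Isometry g)
    (hgs : Surjective g) : MeasurePreserving g := by
  let e : Plane ≃ᵢ Plane := ⟨Equiv.ofBijective g ⟨hg.injective, hgs⟩, hg⟩
  let L := e.toRealLinearIsometryEquiv
  have hL : ∀ x, L x = g x - g 0 := fun x => e.toRealLinearIsometryEquiv_apply x
  have : g = fun x => L x + g 0 := by funext x; rw [hL]; abel
  rw [this]
  exact (measurePreserving_add_right volume (g 0)).comp L.measurePreserving

/-- The multi-GENEO sublevel set filtrations built from normalized convolution with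
radial integrable kernels are `ε`-interleaved via any surjective isometry `g` of the
Euclidean plane, where `ε = sup_x |φ₁ x − φ₂ (g x)|`. -/
theorem multiGENEO_convolution_interleaved
    {n : ℕ} (G : Fin n → Plane → ℝ)
    (hG : ∀ i, Integrable (G i)) (hG0 : ∀ i, (∫ y, |G i y|) ≠ 0)
    (hGrad : ∀ i, ∀ u v : Plane, ‖u‖ = ‖v‖ → G i u = G i v)
    (φ₁ φ₂ : Plane → ℝ)
    (hφ₁m : Measurable φ₁) (hφ₂m : Measurable φ₂)
    (hφ₁b : IsBoundedFun φ₁) (hφ₂b : IsBoundedFun φ₂)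
    (g : Plane → Plane) (hg : Isometry g) (hgs : Surjective g)
    (ε : ℝ) (hε : ε = ⨆ x, |φ₁ x - φ₂ (g x)|) :
    ∀ (a : Fin n → ℝ) (x : Plane),
      ((∀ i, normConv (G i) φ₁ x ≤ a i) →
        ∀ i, normConv (G i) φ₂ (g x) ≤ a i + ε) ∧
      ((∀ i, normConv (G i) φ₂ (g x) ≤ a i) →
        ∀ i, normConv (G i) φ₁ x ≤ a i + ε) := by
  have hmp : MeasurePreserving g := measurePreserving_of_isometry hg hgs
  have hme : MeasurableEmbedding g := hg.isClosedEmbedding.measurableEmbedding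
  -- change of variables: F_G(φ₂)(g x) = F_G(φ₂ ∘ g)(x)
  have key : ∀ i (x : Plane), normConv (G i) φ₂ (g x) = normConv (G i) (φ₂ ∘ g) x := by
    intro i x
    unfold normConv
    congr 1
    rw [← hmp.integral_comp hme (fun y => φ₂ y * G i (g x - y))]
    refine integral_congr_ae (Filter.Eventually.of_forall fun z => ?_)
    have hnorm : ‖g x - g z‖ = ‖x - z‖ := by
      rw [← dist_eq_norm, ← dist_eq_norm, hg.dist_eq]
    simp only [comp_apply, hGrad i _ _ hnorm]
  obtain ⟨C₁, hC₁⟩ := hφ₁b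
  obtain ⟨C₂, hC₂⟩ := hφ₂b
  have hbdd : BddAbove (Set.range fun x => |φ₁ x - φ₂ (g x)|) := by
    refine ⟨C₁ + C₂, fun r ⟨y, hy⟩ => ?_⟩
    rw [← hy]
    exact (abs_sub _ _).trans (add_le_add (hC₁ y) (hC₂ (g y)))
  have hd : ∀ y, |φ₁ y - φ₂ (g y)| ≤ ε := fun y => hε ▸ le_ciSup hbdd y
  have hψm : AEStronglyMeasurable (φ₂ ∘ g) volume :=
    (hφ₂m.comp hg.continuous.measurable).aestronglyMeasurable
  have hψb : IsBoundedFun (φ₂ ∘ g) := ⟨C₂, fun y => hC₂ (g y)⟩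
  intro a x
  constructor
  · intro h i
    rw [key i x]
    have := normConv_le_of_dist_le (G i) (hG i) (hG0 i) (φ₂ ∘ g) φ₁ hψm
      hφ₁m.aestronglyMeasurable hψb ⟨C₁, hC₁⟩ ε
      (fun y => by simpa [abs_sub_comm] using hd y) x
    linarith [h i, this]
  · intro h i
    have hk := key i x
    have := normConv_le_of_dist_le (G i) (hG i) (hG0 i) φ₁ (φ₂ ∘ g)
      hφ₁m.aestronglyMeasurable hψm ⟨C₁, hC₁⟩ hψb ε (fun y => hd y) x
    rw [← hk] at this
    linarith [h i, this]
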